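/- Let P1 = conv{e1+e2, e3, e4, 0} and P2 = conv{e3+e4, e1, e2, 0} be tetrahedra in R^4. Then the volume polynomial vol(T1*P1 + T2*P2) equals (1/3)T1^3*T2 + T1^2*T2^2 + (1/3)T1*T2^3. -/

import Mathlib

open MeasureTheory Pointwise Set Function
open scoped ENNReal

noncomputable section

/-- The i-th standard basis vector of ℝ⁴. -/
def e (i : Fin 4) : Fin 4 → ℝ := Pi.single i 1

/-- The tetrahedron P₁ = conv{e₁+e₂, e₃, e₄, 0}. -/
def P1 : Set (Fin 4 → ℝ) := convexHull ℝ {e 0 + e 1, e 2, e 3, 0}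

/-- The tetrahedron P₂ = conv{e₃+e₄, e₁, e₂, 0}. -/
def P2 : Set (Fin 4 → ℝ) := convexHull ℝ {e 2 + e 3, e 0, e 1, 0}

lemma vert_vals : ∀ i j : Fin 4, e i j = if j = i then 1 else 0 := by
  intro i j; simp [e, Pi.single_apply]

lemma P1_eq : P1 = {x : Fin 4 → ℝ | x 0 = x 1 ∧ 0 ≤ x 1 ∧ 0 ≤ x 2 ∧ 0 ≤ x 3 ∧ x 1 + x 2 + x 3 ≤ 1} := by
  apply Subset.antisymm
  · apply convexHull_min
    · intro x hx
      simp only [mem_insert_iff, mem_singleton_iff] at hx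
      rcases hx with rfl | rfl | rfl | rfl <;>
        refine ⟨?_, ?_, ?_, ?_, ?_⟩ <;>
        simp [vert_vals]
    · intro x hx y hy a b ha hb hab
      simp only [mem_setOf_eq, Pi.add_apply, Pi.smul_apply, smul_eq_mul] at *
      refine ⟨by nlinarith [hx.1, hy.1], by nlinarith [hx.2.1, hy.2.1],
        by nlinarith [hx.2.2.1, hy.2.2.1], by nlinarith [hx.2.2.2.1, hy.2.2.2.1],
        by nlinarith [hx.2.2.2.2, hy.2.2.2.2]⟩
  · intro x hx
    obtain ⟨h01, hx1, hx2, hx3, hs⟩ := hx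
    have hmem : ∀ i : Fin 4, (![e 0 + e 1, e 2, e 3, 0] : Fin 4 → (Fin 4 → ℝ)) i ∈
        ({e 0 + e 1, e 2, e 3, 0} : Set (Fin 4 → ℝ)) := by
      intro i; fin_cases i <;> simp
    have hconv := (convex_convexHull ℝ ({e 0 + e 1, e 2, e 3, 0} : Set (Fin 4 → ℝ)))
    have := hconv.sum_mem (t := Finset.univ)
      (w := ![x 1, x 2, x 3, 1 - x 1 - x 2 - x 3]) (z := ![e 0 + e 1, e 2, e 3, 0])
      (by intro i _; fin_cases i
          · simpa using hx1
          · simpa using hx2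
          · simpa using hx3
          · simp [Matrix.vecHead, Matrix.vecTail]; linarith)
      (by simp [Fin.sum_univ_four, Matrix.vecHead, Matrix.vecTail]; try ring)
      (fun i _ => subset_convexHull ℝ _ (hmem i))
    have hxeq : ∑ i : Fin 4, (![x 1, x 2, x 3, 1 - x 1 - x 2 - x 3] : Fin 4 → ℝ) i •
        (![e 0 + e 1, e 2, e 3, 0] : Fin 4 → (Fin 4 → ℝ)) i = x := by
      funext j
      fin_cases j <;> simp [Fin.sum_univ_four, vert_vals, Matrix.vecHead, Matrix.vecTail] <;> linarith
    rw [hxeq] at this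
    exact this

lemma P2_eq : P2 = {x : Fin 4 → ℝ | x 2 = x 3 ∧ 0 ≤ x 3 ∧ 0 ≤ x 0 ∧ 0 ≤ x 1 ∧ x 3 + x 0 + x 1 ≤ 1} := by
  apply Subset.antisymm
  · apply convexHull_min
    · intro x hx
      simp only [mem_insert_iff, mem_singleton_iff] at hx
      rcases hx with rfl | rfl | rfl | rfl <;>
        refine ⟨?_, ?_, ?_, ?_, ?_⟩ <;>
        simp [vert_vals]
    · intro x hx y hy a b ha hb hab
      simp only [mem_setOf_eq, Pi.add_apply, Pi.smul_apply, smul_eq_mul] at *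
      refine ⟨by nlinarith [hx.1, hy.1], by nlinarith [hx.2.1, hy.2.1],
        by nlinarith [hx.2.2.1, hy.2.2.1], by nlinarith [hx.2.2.2.1, hy.2.2.2.1],
        by nlinarith [hx.2.2.2.2, hy.2.2.2.2]⟩
  · intro x hx
    obtain ⟨h01, hx1, hx2, hx3, hs⟩ := hx
    have hmem : ∀ i : Fin 4, (![e 2 + e 3, e 0, e 1, 0] : Fin 4 → (Fin 4 → ℝ)) i ∈
        ({e 2 + e 3, e 0, e 1, 0} : Set (Fin 4 → ℝ)) := by
      intro i; fin_cases i <;> simp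
    have hconv := (convex_convexHull ℝ ({e 2 + e 3, e 0, e 1, 0} : Set (Fin 4 → ℝ)))
    have := hconv.sum_mem (t := Finset.univ)
      (w := ![x 3, x 0, x 1, 1 - x 3 - x 0 - x 1]) (z := ![e 2 + e 3, e 0, e 1, 0])
      (by intro i _; fin_cases i
          · simpa using hx1
          · simpa using hx2
          · simpa using hx3
          · simp [Matrix.vecHead, Matrix.vecTail]; linarith)
      (by simp [Fin.sum_univ_four, Matrix.vecHead, Matrix.vecTail]; try ring)
      (fun i _ => subset_convexHull ℝ _ (hmem i))
    have hxeq : ∑ i : Fin 4, (![x 3, x 0, x 1, 1 - x 3 - x 0 - x 1] : Fin 4 → ℝ) i •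
        (![e 2 + e 3, e 0, e 1, 0] : Fin 4 → (Fin 4 → ℝ)) i = x := by
      funext j
      fin_cases j <;> simp [Fin.sum_univ_four, vert_vals, Matrix.vecHead, Matrix.vecTail] <;> linarith
    rw [hxeq] at this
    exact this

lemma smul_P1 (t : ℝ) (ht : 0 ≤ t) :
    t • P1 = {x : Fin 4 → ℝ | x 0 = x 1 ∧ 0 ≤ x 1 ∧ 0 ≤ x 2 ∧ 0 ≤ x 3 ∧ x 1 + x 2 + x 3 ≤ t} := by
  rcases ht.eq_or_lt with h | h
  · subst h
    have hne : P1.Nonempty := ⟨0, by rw [P1_eq]; exact ⟨by simp, by simp, by simp, by simp, by simp⟩⟩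
    rw [zero_smul_set hne]
    ext x
    simp only [mem_singleton_iff, mem_setOf_eq]
    constructor
    · rintro rfl; exact ⟨by simp, le_refl _, le_refl _, le_refl _, by simp⟩
    · rintro ⟨ha, hb, hc, hd, he⟩
      have hb' : x 1 = 0 := by linarith
      have hc' : x 2 = 0 := by linarith
      have hd' : x 3 = 0 := by linarith
      have ha' : x 0 = 0 := by rw [ha, hb']
      funext i; fin_cases i <;> simp_all
  · have htne := ne_of_gt h
    ext x
    rw [mem_smul_set_iff_inv_smul_mem₀ htne, P1_eq]
    simp only [mem_setOf_eq, Pi.smul_apply, smul_eq_mul]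
    have hinv : t * t⁻¹ = 1 := mul_inv_cancel₀ htne
    constructor
    · rintro ⟨ha, hb, hc, hd, he⟩
      have e1 : t * (t⁻¹ * x 1) = x 1 := by field_simp
      have e2 : t * (t⁻¹ * x 2) = x 2 := by field_simp
      have e3 : t * (t⁻¹ * x 3) = x 3 := by field_simp
      have e0 : t * (t⁻¹ * x 0) = x 0 := by field_simp
      have hsum := mul_le_mul_of_nonneg_left he h.le
      have hb2 := mul_le_mul_of_nonneg_left hb h.le
      have hc2 := mul_le_mul_of_nonneg_left hc h.le
      have hd2 := mul_le_mul_of_nonneg_left hd h.le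
      refine ⟨?_, by nlinarith, by nlinarith, by nlinarith, by nlinarith⟩
      · have := congrArg (t * ·) ha
        simpa [e0, e1] using this
    · rintro ⟨ha, hb, hc, hd, he⟩
      have hi : (0:ℝ) ≤ t⁻¹ := inv_nonneg.2 h.le
      refine ⟨by rw [ha], mul_nonneg hi hb, mul_nonneg hi hc, mul_nonneg hi hd, ?_⟩
      have := mul_le_mul_of_nonneg_left he hi
      calc t⁻¹ * x 1 + t⁻¹ * x 2 + t⁻¹ * x 3 = t⁻¹ * (x 1 + x 2 + x 3) := by ring
        _ ≤ t⁻¹ * t := this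
        _ = 1 := by field_simp

lemma smul_P2 (t : ℝ) (ht : 0 ≤ t) :
    t • P2 = {x : Fin 4 → ℝ | x 2 = x 3 ∧ 0 ≤ x 3 ∧ 0 ≤ x 0 ∧ 0 ≤ x 1 ∧ x 3 + x 0 + x 1 ≤ t} := by
  rcases ht.eq_or_lt with h | h
  · subst h
    have hne : P2.Nonempty := ⟨0, by rw [P2_eq]; exact ⟨by simp, by simp, by simp, by simp, by simp⟩⟩
    rw [zero_smul_set hne]
    ext x
    simp only [mem_singleton_iff, mem_setOf_eq]
    constructor
    · rintro rfl; exact ⟨by simp, le_refl _, le_refl _, le_refl _, by simp⟩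
    · rintro ⟨ha, hb, hc, hd, he⟩
      have hb' : x 3 = 0 := by linarith
      have hc' : x 0 = 0 := by linarith
      have hd' : x 1 = 0 := by linarith
      have ha' : x 2 = 0 := by rw [ha, hb']
      funext i; fin_cases i <;> simp_all
  · have htne := ne_of_gt h
    ext x
    rw [mem_smul_set_iff_inv_smul_mem₀ htne, P2_eq]
    simp only [mem_setOf_eq, Pi.smul_apply, smul_eq_mul]
    have hinv : t * t⁻¹ = 1 := mul_inv_cancel₀ htne
    constructor
    · rintro ⟨ha, hb, hc, hd, he⟩
      have e1 : t * (t⁻¹ * x 3) = x 3 := by field_simp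
      have e2 : t * (t⁻¹ * x 0) = x 0 := by field_simp
      have e3 : t * (t⁻¹ * x 1) = x 1 := by field_simp
      have e0 : t * (t⁻¹ * x 2) = x 2 := by field_simp
      have hsum := mul_le_mul_of_nonneg_left he h.le
      have hb2 := mul_le_mul_of_nonneg_left hb h.le
      have hc2 := mul_le_mul_of_nonneg_left hc h.le
      have hd2 := mul_le_mul_of_nonneg_left hd h.le
      refine ⟨?_, by nlinarith, by nlinarith, by nlinarith, by nlinarith⟩
      · have := congrArg (t * ·) ha
        simpa [e0, e1] using this
    · rintro ⟨ha, hb, hc, hd, he⟩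
      have hi : (0:ℝ) ≤ t⁻¹ := inv_nonneg.2 h.le
      refine ⟨by rw [ha], mul_nonneg hi hb, mul_nonneg hi hc, mul_nonneg hi hd, ?_⟩
      have := mul_le_mul_of_nonneg_left he hi
      calc t⁻¹ * x 3 + t⁻¹ * x 0 + t⁻¹ * x 1 = t⁻¹ * (x 3 + x 0 + x 1) := by ring
        _ ≤ t⁻¹ * t := this
        _ = 1 := by field_simp

def Sset (t1 t2 : ℝ) : Set (Fin 4 → ℝ) :=
  {x | 0 ≤ x 0 ∧ 0 ≤ x 1 ∧ 0 ≤ x 2 ∧ 0 ≤ x 3 ∧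
    x 0 - x 1 ≤ t2 ∧ x 1 - x 0 ≤ t2 ∧ x 2 - x 3 ≤ t1 ∧ x 3 - x 2 ≤ t1 ∧
    2*x 0 - x 1 + x 2 + x 3 ≤ t1 + 2*t2 ∧ -x 0 + 2*x 1 + x 2 + x 3 ≤ t1 + 2*t2 ∧
    x 0 + x 1 + 2*x 2 - x 3 ≤ 2*t1 + t2 ∧ x 0 + x 1 - x 2 + 2*x 3 ≤ 2*t1 + t2}

lemma sum_eq (t1 t2 : ℝ) (h1 : 0 ≤ t1) (h2 : 0 ≤ t2) :
    t1 • P1 + t2 • P2 = Sset t1 t2 := by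
  apply Subset.antisymm
  · rintro x hx
    rw [Set.mem_add] at hx
    obtain ⟨p, hp, q, hq, rfl⟩ := hx
    rw [smul_P1 t1 h1] at hp; rw [smul_P2 t2 h2] at hq
    obtain ⟨p01, pp1, pp2, pp3, ps⟩ := hp
    obtain ⟨q23, qq3, qq0, qq1, qs⟩ := hq
    refine ⟨?_, ?_, ?_, ?_, ?_, ?_, ?_, ?_, ?_, ?_, ?_, ?_⟩ <;>
      simp only [Pi.add_apply] <;> linarith
  · intro x hx
    obtain ⟨c1, c2, c3, c4, c5, c6, c7, c8, c9, c10, c11, c12⟩ := hx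
    have key : ∃ a d : ℝ, 0 ≤ a ∧ a ≤ x 0 ∧ a ≤ x 1 ∧ 0 ≤ d ∧ d ≤ x 2 ∧ d ≤ x 3 ∧
        a + (x 2 - d) + (x 3 - d) ≤ t1 ∧ d + (x 0 - a) + (x 1 - a) ≤ t2 := by
      rcases le_total (x 0) (x 1) with h01 | h01 <;> rcases le_total (x 2) (x 3) with h23 | h23
      · by_cases hc : x 0 ≤ (t1 - x 2 - x 3) + 2 * x 2
        · rcases le_total (x 2) (t2 - x 0 - x 1 + 2 * x 0) with hd | hd
          · exact ⟨x 0, x 2, by linarith, by linarith, by linarith, by linarith, by linarith,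
              by linarith, by linarith, by linarith⟩
          · exact ⟨x 0, t2 - x 0 - x 1 + 2 * x 0, by linarith, by linarith, by linarith,
              by linarith, by linarith, by linarith, by linarith, by linarith⟩
        · exact ⟨(t1 - x 2 - x 3) + 2 * x 2, x 2, by linarith, by linarith, by linarith,
            by linarith, by linarith, by linarith, by linarith, by linarith⟩
      · by_cases hc : x 0 ≤ (t1 - x 2 - x 3) + 2 * x 3
        · rcases le_total (x 3) (t2 - x 0 - x 1 + 2 * x 0) with hd | hd
          · exact ⟨x 0, x 3, by linarith, by linarith, by linarith, by linarith, by linarith,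
              by linarith, by linarith, by linarith⟩
          · exact ⟨x 0, t2 - x 0 - x 1 + 2 * x 0, by linarith, by linarith, by linarith,
              by linarith, by linarith, by linarith, by linarith, by linarith⟩
        · exact ⟨(t1 - x 2 - x 3) + 2 * x 3, x 3, by linarith, by linarith, by linarith,
            by linarith, by linarith, by linarith, by linarith, by linarith⟩
      · by_cases hc : x 1 ≤ (t1 - x 2 - x 3) + 2 * x 2
        · rcases le_total (x 2) (t2 - x 0 - x 1 + 2 * x 1) with hd | hd
          · exact ⟨x 1, x 2, by linarith, by linarith, by linarith, by linarith, by linarith,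
              by linarith, by linarith, by linarith⟩
          · exact ⟨x 1, t2 - x 0 - x 1 + 2 * x 1, by linarith, by linarith, by linarith,
              by linarith, by linarith, by linarith, by linarith, by linarith⟩
        · exact ⟨(t1 - x 2 - x 3) + 2 * x 2, x 2, by linarith, by linarith, by linarith,
            by linarith, by linarith, by linarith, by linarith, by linarith⟩
      · by_cases hc : x 1 ≤ (t1 - x 2 - x 3) + 2 * x 3
        · rcases le_total (x 3) (t2 - x 0 - x 1 + 2 * x 1) with hd | hd
          · exact ⟨x 1, x 3, by linarith, by linarith, by linarith, by linarith, by linarith,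
              by linarith, by linarith, by linarith⟩
          · exact ⟨x 1, t2 - x 0 - x 1 + 2 * x 1, by linarith, by linarith, by linarith,
              by linarith, by linarith, by linarith, by linarith, by linarith⟩
        · exact ⟨(t1 - x 2 - x 3) + 2 * x 3, x 3, by linarith, by linarith, by linarith,
            by linarith, by linarith, by linarith, by linarith, by linarith⟩
    obtain ⟨a, d, ha0, ha1, ha2, hd0, hd1, hd2, hsum1, hsum2⟩ := key
    rw [Set.mem_add]
    refine ⟨![a, a, x 2 - d, x 3 - d], ?_, ![x 0 - a, x 1 - a, d, d], ?_, ?_⟩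
    · rw [smul_P1 t1 h1]
      refine ⟨?_, ?_, ?_, ?_, ?_⟩ <;> simp [Matrix.vecHead, Matrix.vecTail] <;> linarith
    · rw [smul_P2 t2 h2]
      refine ⟨?_, ?_, ?_, ?_, ?_⟩ <;> simp [Matrix.vecHead, Matrix.vecTail] <;> linarith
    · funext i
      fin_cases i <;> simp [Matrix.vecHead, Matrix.vecTail] <;> ring

def Yset (t1 t2 : ℝ) : Set (Fin 4 → ℝ) :=
  {y | 0 ≤ y 2 + y 0 ∧ 0 ≤ y 2 - y 0 ∧ 0 ≤ y 3 + y 1 ∧ 0 ≤ y 3 - y 1 ∧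
    2*y 0 ≤ t2 ∧ -(2*y 0) ≤ t2 ∧ 2*y 1 ≤ t1 ∧ -(2*y 1) ≤ t1 ∧
    y 2 + 2*y 3 + 3*y 0 ≤ t1 + 2*t2 ∧ y 2 + 2*y 3 - 3*y 0 ≤ t1 + 2*t2 ∧
    2*y 2 + y 3 + 3*y 1 ≤ 2*t1 + t2 ∧ 2*y 2 + y 3 - 3*y 1 ≤ 2*t1 + t2}

def M4 : Matrix (Fin 4) (Fin 4) ℝ := !![1,0,1,0; -1,0,1,0; 0,1,0,1; 0,-1,0,1]

lemma M4_det : M4.det = -4 := by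
  have h : Fin.succAbove (2 : Fin 4) (2 : Fin 3) = 3 := by decide
  simp [M4, Matrix.det_succ_row_zero, Fin.sum_univ_succ, h]
  norm_num

lemma M4_apply (y : Fin 4 → ℝ) :
    Matrix.toLin' M4 y = ![y 0 + y 2, -y 0 + y 2, y 1 + y 3, -y 1 + y 3] := by
  funext i
  fin_cases i <;>
    simp [Matrix.toLin'_apply, M4, Matrix.mulVec, dotProduct, Fin.sum_univ_four,
      Matrix.cons_val_succ] <;> ring

lemma Y_preimage (t1 t2 : ℝ) : Yset t1 t2 = (Matrix.toLin' M4) ⁻¹' (Sset t1 t2) := by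
  ext y
  rw [Set.mem_preimage, M4_apply]
  have v0 : (![y 0 + y 2, -y 0 + y 2, y 1 + y 3, -y 1 + y 3] : Fin 4 → ℝ) 0 = y 0 + y 2 := rfl
  have v1 : (![y 0 + y 2, -y 0 + y 2, y 1 + y 3, -y 1 + y 3] : Fin 4 → ℝ) 1 = -y 0 + y 2 := rfl
  have v2 : (![y 0 + y 2, -y 0 + y 2, y 1 + y 3, -y 1 + y 3] : Fin 4 → ℝ) 2 = y 1 + y 3 := rfl
  have v3 : (![y 0 + y 2, -y 0 + y 2, y 1 + y 3, -y 1 + y 3] : Fin 4 → ℝ) 3 = -y 1 + y 3 := rfl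
  simp only [Sset, Yset, mem_setOf_eq, v0, v1, v2, v3]
  constructor <;>
    (intro h
     obtain ⟨a1,a2,a3,a4,a5,a6,a7,a8,a9,a10,a11,a12⟩ := h
     refine ⟨?_,?_,?_,?_,?_,?_,?_,?_,?_,?_,?_,?_⟩ <;> linarith)

lemma measurableSet_Sset (t1 t2 : ℝ) : MeasurableSet (Sset t1 t2) := by
  unfold Sset
  simp only [setOf_and]
  repeat' apply MeasurableSet.inter
  all_goals exact measurableSet_le (by fun_prop) (by fun_prop)

lemma measurableSet_Yset (t1 t2 : ℝ) : MeasurableSet (Yset t1 t2) := by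
  rw [Y_preimage]
  exact (measurableSet_Sset t1 t2).preimage
    (LinearMap.continuous_of_finiteDimensional _).measurable

lemma vol_S_eq_4_vol_Y (t1 t2 : ℝ) :
    volume (Sset t1 t2) = 4 * volume (Yset t1 t2) := by
  have hdet : LinearMap.det (Matrix.toLin' M4) ≠ 0 := by
    rw [LinearMap.det_toLin', M4_det]; norm_num
  have h := Measure.addHaar_preimage_linearMap (volume : Measure (Fin 4 → ℝ)) hdet (Sset t1 t2)
  rw [← Y_preimage] at h
  rw [h, LinearMap.det_toLin', M4_det]
  rw [← mul_assoc]
  have habs : |((-4:ℝ))⁻¹| = (4:ℝ)⁻¹ := by norm_num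
  rw [habs, ENNReal.ofReal_inv_of_pos (by norm_num), ENNReal.ofReal_ofNat,
    ENNReal.mul_inv_cancel (by norm_num) (by norm_num), one_mul]

lemma intpoly (a b c0 c1 c2 c3 : ℝ) :
    ∫ x in a..b, (c0 + c1*x + c2*x^2 + c3*x^3) =
      c0*(b-a) + c1*(b^2-a^2)/2 + c2*(b^3-a^3)/3 + c3*(b^4-a^4)/4 := by
  have i1 : IntervalIntegrable (fun x : ℝ => c0 + c1*x + c2*x^2) volume a b :=
    (Continuous.add (Continuous.add continuous_const (continuous_const.mul continuous_id))
      (continuous_const.mul (continuous_pow 2))).intervalIntegrable a b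
  have i2 : IntervalIntegrable (fun x : ℝ => c3*x^3) volume a b :=
    (continuous_const.mul (continuous_pow 3)).intervalIntegrable a b
  have i3 : IntervalIntegrable (fun x : ℝ => c0 + c1*x) volume a b :=
    (Continuous.add continuous_const (continuous_const.mul continuous_id)).intervalIntegrable a b
  have i4 : IntervalIntegrable (fun x : ℝ => c2*x^2) volume a b :=
    (continuous_const.mul (continuous_pow 2)).intervalIntegrable a b
  have i5 : IntervalIntegrable (fun x : ℝ => (c0:ℝ)) volume a b :=
    intervalIntegrable_const
  have i6 : IntervalIntegrable (fun x : ℝ => c1*x) volume a b :=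
    (continuous_const.mul continuous_id).intervalIntegrable a b
  rw [show (fun x : ℝ => c0 + c1*x + c2*x^2 + c3*x^3) = fun x : ℝ =>
    ((fun x => c0 + c1*x + c2*x^2) x + (fun x => c3*x^3) x) from rfl]
  rw [intervalIntegral.integral_add i1 i2]
  rw [show (fun x : ℝ => c0 + c1*x + c2*x^2) = fun x : ℝ =>
    ((fun x => c0 + c1*x) x + (fun x => c2*x^2) x) from rfl]
  rw [intervalIntegral.integral_add i3 i4]
  rw [intervalIntegral.integral_add i5 i6]
  rw [intervalIntegral.integral_const]
  rw [intervalIntegral.integral_const_mul, intervalIntegral.integral_const_mul,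
    intervalIntegral.integral_const_mul]
  rw [integral_id, integral_pow, integral_pow]
  simp only [smul_eq_mul]
  ring

def Apoly (t1 t2 u v : ℝ) : ℝ :=
  t1^2/4 + t1*t2 + t2^2/4 - 2*t1*u - t2*u - t1*v - 2*t2*v + u^2 + 4*u*v + v^2

def Bpoly (t1 t2 u : ℝ) : ℝ :=
  t1^3/12 + t1^2*t2/2 + t1*t2^2/4 - t1^2*u - t1*t2*u + t1*u^2

lemma level1 (t1 t2 r w s : ℝ) :
    (∫⁻ z : ℝ, (if (0 ≤ s + r ∧ 0 ≤ s - r ∧ 0 ≤ z + w ∧ 0 ≤ z - w ∧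
        2*r ≤ t2 ∧ -(2*r) ≤ t2 ∧ 2*w ≤ t1 ∧ -(2*w) ≤ t1 ∧
        s + 2*z + 3*r ≤ t1 + 2*t2 ∧ s + 2*z - 3*r ≤ t1 + 2*t2 ∧
        2*s + z + 3*w ≤ 2*t1 + t2 ∧ 2*s + z - 3*w ≤ 2*t1 + t2) then (1:ℝ≥0∞) else 0))
    = if (2*|r| ≤ t2 ∧ 2*|w| ≤ t1 ∧ |r| ≤ s) then
        ENNReal.ofReal (min ((t1 + 2*t2 - 3*|r| - s)/2) (2*t1 + t2 - 3*|w| - 2*s) - |w|) else 0 := by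
  classical
  by_cases hP : 2*|r| ≤ t2 ∧ 2*|w| ≤ t1 ∧ |r| ≤ s
  · obtain ⟨hr, hw, hs⟩ := hP
    have hr1 := le_abs_self r
    have hr2 := neg_abs_le r
    have hw1 := le_abs_self w
    have hw2 := neg_abs_le w
    rw [if_pos ⟨hr, hw, hs⟩]
    have hiff : ∀ z : ℝ, (0 ≤ s + r ∧ 0 ≤ s - r ∧ 0 ≤ z + w ∧ 0 ≤ z - w ∧
        2*r ≤ t2 ∧ -(2*r) ≤ t2 ∧ 2*w ≤ t1 ∧ -(2*w) ≤ t1 ∧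
        s + 2*z + 3*r ≤ t1 + 2*t2 ∧ s + 2*z - 3*r ≤ t1 + 2*t2 ∧
        2*s + z + 3*w ≤ 2*t1 + t2 ∧ 2*s + z - 3*w ≤ 2*t1 + t2) ↔
        (z ∈ Icc (|w|) (min ((t1 + 2*t2 - 3*|r| - s)/2) (2*t1 + t2 - 3*|w| - 2*s))) := by
      intro z
      rw [mem_Icc, le_min_iff]
      constructor
      · rintro ⟨d1,d2,d3,d4,d5,d6,d7,d8,d9,d10,d11,d12⟩
        have hwz : |w| ≤ z := abs_le.mpr ⟨by linarith, by linarith⟩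
        have hrz : 3*|r| ≤ t1 + 2*t2 - s - 2*z := by
          have : |3*r| ≤ t1 + 2*t2 - s - 2*z := abs_le.mpr ⟨by linarith, by linarith⟩
          calc 3*|r| = |3*r| := by rw [abs_mul]; norm_num
            _ ≤ _ := this
        have hwz2 : 3*|w| ≤ 2*t1 + t2 - 2*s - z := by
          have : |3*w| ≤ 2*t1 + t2 - 2*s - z := abs_le.mpr ⟨by linarith, by linarith⟩
          calc 3*|w| = |3*w| := by rw [abs_mul]; norm_num
            _ ≤ _ := this
        exact ⟨hwz, by linarith, by linarith⟩
      · rintro ⟨h1, h2, h3⟩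
        have h1' := abs_le.mp h1
        refine ⟨by linarith, by linarith, by linarith [h1'.1, h1'.2], by linarith [h1'.1, h1'.2],
          by linarith, by linarith, by linarith, by linarith, ?_, ?_, ?_, ?_⟩ <;> linarith
    have hfun : (fun z : ℝ => (if (0 ≤ s + r ∧ 0 ≤ s - r ∧ 0 ≤ z + w ∧ 0 ≤ z - w ∧
        2*r ≤ t2 ∧ -(2*r) ≤ t2 ∧ 2*w ≤ t1 ∧ -(2*w) ≤ t1 ∧
        s + 2*z + 3*r ≤ t1 + 2*t2 ∧ s + 2*z - 3*r ≤ t1 + 2*t2 ∧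
        2*s + z + 3*w ≤ 2*t1 + t2 ∧ 2*s + z - 3*w ≤ 2*t1 + t2) then (1:ℝ≥0∞) else 0))
        = fun z => (Icc (|w|) (min ((t1 + 2*t2 - 3*|r| - s)/2)
            (2*t1 + t2 - 3*|w| - 2*s))).indicator 1 z := by
      funext z
      rw [Set.indicator_apply, Pi.one_apply]
      exact if_congr (hiff z) rfl rfl
    rw [hfun, lintegral_indicator_one measurableSet_Icc, Real.volume_Icc]
  · rw [if_neg hP]
    have h0 : ∀ z : ℝ, (if (0 ≤ s + r ∧ 0 ≤ s - r ∧ 0 ≤ z + w ∧ 0 ≤ z - w ∧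
        2*r ≤ t2 ∧ -(2*r) ≤ t2 ∧ 2*w ≤ t1 ∧ -(2*w) ≤ t1 ∧
        s + 2*z + 3*r ≤ t1 + 2*t2 ∧ s + 2*z - 3*r ≤ t1 + 2*t2 ∧
        2*s + z + 3*w ≤ 2*t1 + t2 ∧ 2*s + z - 3*w ≤ 2*t1 + t2) then (1:ℝ≥0∞) else 0) = 0 := by
      intro z
      rw [if_neg]
      rintro ⟨d1,d2,d3,d4,d5,d6,d7,d8,d9,d10,d11,d12⟩
      exact hP ⟨by rcases abs_cases r with ⟨h,_⟩|⟨h,_⟩ <;> linarith,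
        by rcases abs_cases w with ⟨h,_⟩|⟨h,_⟩ <;> linarith,
        abs_le.mpr ⟨by linarith, by linarith⟩⟩
    simp only [h0, lintegral_zero]

lemma level2 (t1 t2 r w : ℝ) :
    (∫⁻ s : ℝ, (if (2*|r| ≤ t2 ∧ 2*|w| ≤ t1 ∧ |r| ≤ s) then
        ENNReal.ofReal (min ((t1 + 2*t2 - 3*|r| - s)/2) (2*t1 + t2 - 3*|w| - 2*s) - |w|) else 0))
    = if (2*|r| ≤ t2 ∧ 2*|w| ≤ t1) then ENNReal.ofReal (Apoly t1 t2 |r| |w|) else 0 := by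
  classical
  by_cases hP : 2*|r| ≤ t2 ∧ 2*|w| ≤ t1
  · obtain ⟨hr, hw⟩ := hP
    rw [if_pos ⟨hr, hw⟩]
    set u := |r| with hu_def
    set v := |w| with hv_def
    have hu : 0 ≤ u := abs_nonneg r
    have hv : 0 ≤ v := abs_nonneg w
    set sE := t1 + t2/2 - 2*v with hsE
    set sS := t1 + u - 2*v with hsS
    have husS : u ≤ sS := by rw [hsS]; linarith
    have hsSE : sS ≤ sE := by rw [hsS, hsE]; linarith
    have husE : u ≤ sE := le_trans husS hsSE
    have hcont : Continuous (fun s : ℝ => min ((t1 + 2*t2 - 3*u - s)/2) (2*t1 + t2 - 3*v - 2*s) - v) := by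
      apply Continuous.sub _ continuous_const
      exact Continuous.min (by fun_prop) (by fun_prop)
    have hfun : (fun s : ℝ => if (2*u ≤ t2 ∧ 2*v ≤ t1 ∧ u ≤ s) then
        ENNReal.ofReal (min ((t1 + 2*t2 - 3*u - s)/2) (2*t1 + t2 - 3*v - 2*s) - v) else 0)
        = fun s => (Icc u sE).indicator
            (fun s => ENNReal.ofReal (min ((t1 + 2*t2 - 3*u - s)/2) (2*t1 + t2 - 3*v - 2*s) - v)) s := by
      funext s
      rw [Set.indicator_apply]
      by_cases hs : s ∈ Icc u sE
      · rw [if_pos ⟨hr, hw, (mem_Icc.mp hs).1⟩, if_pos hs]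
      · rw [if_neg hs]
        rw [mem_Icc] at hs
        push_neg at hs
        by_cases hs1 : u ≤ s
        · have hsgt := hs hs1
          rw [if_pos ⟨hr, hw, hs1⟩, ENNReal.ofReal_eq_zero]
          have : min ((t1 + 2*t2 - 3*u - s)/2) (2*t1 + t2 - 3*v - 2*s) ≤ 2*t1 + t2 - 3*v - 2*s :=
            min_le_right _ _
          rw [hsE] at hsgt
          linarith
        · rw [if_neg (fun hc => hs1 hc.2.2)]
    rw [hfun, lintegral_indicator measurableSet_Icc]
    rw [← ofReal_integral_eq_lintegral_ofReal (hcont.integrableOn_Icc)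
      ((ae_restrict_iff' measurableSet_Icc).mpr (Filter.Eventually.of_forall (fun s hs => by
        rw [mem_Icc] at hs
        refine sub_nonneg.mpr (le_min ?_ ?_)
        · rw [hsE] at hs; linarith [hs.2]
        · rw [hsE] at hs; linarith [hs.2])))]
    rw [MeasureTheory.integral_Icc_eq_integral_Ioc, ← intervalIntegral.integral_of_le husE]
    rw [← intervalIntegral.integral_add_adjacent_intervals (a := u) (b := sS) (c := sE)
      ((hcont.intervalIntegrable u sS)) ((hcont.intervalIntegrable sS sE))]
    have hpc1 : (∫ s in u..sS, (min ((t1 + 2*t2 - 3*u - s)/2) (2*t1 + t2 - 3*v - 2*s) - v))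
        = ∫ s in u..sS, ((t1 + 2*t2 - 3*u)/2 - v + (-(1:ℝ)/2)*s + 0*s^2 + 0*s^3) := by
      refine intervalIntegral.integral_congr fun s hs => ?_
      rw [uIcc_of_le husS, mem_Icc] at hs
      rw [min_eq_left (by rw [hsS] at hs; linarith [hs.2])]
      ring
    have hpc2 : (∫ s in sS..sE, (min ((t1 + 2*t2 - 3*u - s)/2) (2*t1 + t2 - 3*v - 2*s) - v))
        = ∫ s in sS..sE, (2*t1 + t2 - 3*v - v + (-(2:ℝ))*s + 0*s^2 + 0*s^3) := by
      refine intervalIntegral.integral_congr fun s hs => ?_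
      rw [uIcc_of_le hsSE, mem_Icc] at hs
      rw [min_eq_right (by rw [hsS] at hs; linarith [hs.1])]
      ring
    rw [hpc1, hpc2, intpoly, intpoly]
    congr 1
    rw [hsS, hsE]
    simp only [Apoly]
    ring
  · rw [if_neg hP]
    have h0 : ∀ s : ℝ, (if (2*|r| ≤ t2 ∧ 2*|w| ≤ t1 ∧ |r| ≤ s) then
        ENNReal.ofReal (min ((t1 + 2*t2 - 3*|r| - s)/2) (2*t1 + t2 - 3*|w| - 2*s) - |w|) else 0) = 0 :=
      fun s => if_neg (fun hc => hP ⟨hc.1, hc.2.1⟩)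
    simp only [h0, lintegral_zero]

lemma level3 (t1 t2 r : ℝ) (ht1 : 0 ≤ t1) :
    (∫⁻ w : ℝ, (if (2*|r| ≤ t2 ∧ 2*|w| ≤ t1) then ENNReal.ofReal (Apoly t1 t2 |r| |w|) else 0))
    = if 2*|r| ≤ t2 then ENNReal.ofReal (Bpoly t1 t2 |r|) else 0 := by
  classical
  by_cases hP : 2*|r| ≤ t2
  · rw [if_pos hP]
    set u := |r| with hu_def
    have hu : 0 ≤ u := abs_nonneg r
    have hcont : Continuous (fun w : ℝ => Apoly t1 t2 u |w|) := by
      simp only [Apoly]; fun_prop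
    have hfun : (fun w : ℝ => if (2*u ≤ t2 ∧ 2*|w| ≤ t1) then
        ENNReal.ofReal (Apoly t1 t2 u |w|) else 0)
        = fun w => (Icc (-(t1/2)) (t1/2)).indicator
            (fun w => ENNReal.ofReal (Apoly t1 t2 u |w|)) w := by
      funext w
      rw [Set.indicator_apply]
      by_cases hw : w ∈ Icc (-(t1/2)) (t1/2)
      · rw [mem_Icc] at hw
        have : |w| ≤ t1/2 := abs_le.mpr ⟨by linarith [hw.1], hw.2⟩
        rw [if_pos ⟨hP, by linarith⟩, if_pos (mem_Icc.mpr hw)]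
      · rw [if_neg hw, if_neg]
        intro hc
        apply hw
        have := abs_le.mp (show |w| ≤ t1/2 by linarith [hc.2])
        exact mem_Icc.mpr ⟨by linarith [this.1], this.2⟩
    rw [hfun, lintegral_indicator measurableSet_Icc]
    rw [← ofReal_integral_eq_lintegral_ofReal (hcont.integrableOn_Icc)
      ((ae_restrict_iff' measurableSet_Icc).mpr (Filter.Eventually.of_forall (fun w hw => by
        rw [mem_Icc] at hw
        have hv2 : |w| ≤ t1/2 := abs_le.mpr ⟨by linarith [hw.1], hw.2⟩
        have hh1 : (0:ℝ) ≤ t2 - 2*u := by linarith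
        have hh2 : (0:ℝ) ≤ t1 - 2*|w| := by linarith
        simp only [Pi.zero_apply, Apoly]
        nlinarith [sq_nonneg (t2 - 2*u), sq_nonneg (t1 - 2*|w|), mul_nonneg hh1 hh2])))]
    rw [MeasureTheory.integral_Icc_eq_integral_Ioc,
      ← intervalIntegral.integral_of_le (show -(t1/2) ≤ t1/2 by linarith)]
    rw [← intervalIntegral.integral_add_adjacent_intervals (a := -(t1/2)) (b := 0) (c := t1/2)
      ((hcont.intervalIntegrable _ _)) ((hcont.intervalIntegrable _ _))]
    have hpc1 : (∫ w in (-(t1/2))..0, Apoly t1 t2 u |w|)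
        = ∫ w in (-(t1/2))..0, ((t1^2/4 + t1*t2 + t2^2/4 - 2*t1*u - t2*u + u^2)
            + (t1 + 2*t2 - 4*u)*w + 1*w^2 + 0*w^3) := by
      refine intervalIntegral.integral_congr fun w hw => ?_
      rw [uIcc_of_le (show -(t1/2) ≤ (0:ℝ) by linarith), mem_Icc] at hw
      rw [abs_of_nonpos hw.2]
      simp only [Apoly]; ring
    have hpc2 : (∫ w in (0:ℝ)..(t1/2), Apoly t1 t2 u |w|)
        = ∫ w in (0:ℝ)..(t1/2), ((t1^2/4 + t1*t2 + t2^2/4 - 2*t1*u - t2*u + u^2)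
            + (-t1 - 2*t2 + 4*u)*w + 1*w^2 + 0*w^3) := by
      refine intervalIntegral.integral_congr fun w hw => ?_
      rw [uIcc_of_le (show (0:ℝ) ≤ t1/2 by linarith), mem_Icc] at hw
      rw [abs_of_nonneg hw.1]
      simp only [Apoly]; ring
    rw [hpc1, hpc2, intpoly, intpoly]
    congr 1
    simp only [Bpoly]
    ring
  · rw [if_neg hP]
    have h0 : ∀ w : ℝ, (if (2*|r| ≤ t2 ∧ 2*|w| ≤ t1) then
        ENNReal.ofReal (Apoly t1 t2 |r| |w|) else 0) = 0 :=
      fun w => if_neg (fun hc => hP hc.1)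
    simp only [h0, lintegral_zero]

lemma level4 (t1 t2 : ℝ) (ht1 : 0 ≤ t1) (ht2 : 0 ≤ t2) :
    (∫⁻ r : ℝ, (if 2*|r| ≤ t2 then ENNReal.ofReal (Bpoly t1 t2 |r|) else 0))
    = ENNReal.ofReal ((t1^3*t2 + 3*t1^2*t2^2 + t1*t2^3)/12) := by
  classical
  have hcont : Continuous (fun r : ℝ => Bpoly t1 t2 |r|) := by
    simp only [Bpoly]; fun_prop
  have hfun : (fun r : ℝ => if 2*|r| ≤ t2 then ENNReal.ofReal (Bpoly t1 t2 |r|) else 0)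
      = fun r => (Icc (-(t2/2)) (t2/2)).indicator
          (fun r => ENNReal.ofReal (Bpoly t1 t2 |r|)) r := by
    funext r
    rw [Set.indicator_apply]
    by_cases hr : r ∈ Icc (-(t2/2)) (t2/2)
    · rw [mem_Icc] at hr
      have : |r| ≤ t2/2 := abs_le.mpr ⟨by linarith [hr.1], hr.2⟩
      rw [if_pos (by linarith), if_pos (mem_Icc.mpr hr)]
    · rw [if_neg hr, if_neg]
      intro hc
      apply hr
      have := abs_le.mp (show |r| ≤ t2/2 by linarith)
      exact mem_Icc.mpr ⟨by linarith [this.1], this.2⟩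
  rw [hfun, lintegral_indicator measurableSet_Icc]
  rw [← ofReal_integral_eq_lintegral_ofReal (hcont.integrableOn_Icc)
    ((ae_restrict_iff' measurableSet_Icc).mpr (Filter.Eventually.of_forall (fun r hr => by
      rw [mem_Icc] at hr
      have hv2 : |r| ≤ t2/2 := abs_le.mpr ⟨by linarith [hr.1], hr.2⟩
      have hh2 : (0:ℝ) ≤ t2/2 - |r| := by linarith
      simp only [Pi.zero_apply, Bpoly]
      nlinarith [mul_nonneg ht1 (sq_nonneg (|r| - t2/2)),
        mul_nonneg (mul_nonneg ht1 ht1) hh2, pow_nonneg ht1 3, abs_nonneg r])))]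
  rw [MeasureTheory.integral_Icc_eq_integral_Ioc,
    ← intervalIntegral.integral_of_le (show -(t2/2) ≤ t2/2 by linarith)]
  rw [← intervalIntegral.integral_add_adjacent_intervals (a := -(t2/2)) (b := 0) (c := t2/2)
    ((hcont.intervalIntegrable _ _)) ((hcont.intervalIntegrable _ _))]
  have hpc1 : (∫ r in (-(t2/2))..0, Bpoly t1 t2 |r|)
      = ∫ r in (-(t2/2))..0, ((t1^3/12 + t1^2*t2/2 + t1*t2^2/4)
          + (t1^2 + t1*t2)*r + t1*r^2 + 0*r^3) := by
    refine intervalIntegral.integral_congr fun r hr => ?_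
    rw [uIcc_of_le (show -(t2/2) ≤ (0:ℝ) by linarith), mem_Icc] at hr
    rw [abs_of_nonpos hr.2]
    simp only [Bpoly]; ring
  have hpc2 : (∫ r in (0:ℝ)..(t2/2), Bpoly t1 t2 |r|)
      = ∫ r in (0:ℝ)..(t2/2), ((t1^3/12 + t1^2*t2/2 + t1*t2^2/4)
          + (-t1^2 - t1*t2)*r + t1*r^2 + 0*r^3) := by
    refine intervalIntegral.integral_congr fun r hr => ?_
    rw [uIcc_of_le (show (0:ℝ) ≤ t2/2 by linarith), mem_Icc] at hr
    rw [abs_of_nonneg hr.1]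
    simp only [Bpoly]; ring
  rw [hpc1, hpc2, intpoly, intpoly]
  congr 1
  ring

lemma vol_Y (t1 t2 : ℝ) (ht1 : 0 ≤ t1) (ht2 : 0 ≤ t2) :
    volume (Yset t1 t2) = ENNReal.ofReal ((t1^3*t2 + 3*t1^2*t2^2 + t1*t2^3)/12) := by
  classical
  have hY := measurableSet_Yset t1 t2
  have hf : Measurable ((Yset t1 t2).indicator (1 : (Fin 4 → ℝ) → ℝ≥0∞)) :=
    measurable_const.indicator hY
  rw [← lintegral_indicator_one hY]
  have hvol : (volume : Measure (Fin 4 → ℝ)) = Measure.pi (fun _ => volume) :=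
    MeasureTheory.volume_pi
  rw [hvol, lintegral_eq_lmarginal_univ (0 : Fin 4 → ℝ)]
  rw [show (Finset.univ : Finset (Fin 4)) = insert 0 (insert 1 (insert 2 {3})) from by decide]
  rw [lmarginal_insert _ hf (by decide)]
  simp only [lmarginal_insert _ hf (show (1:Fin 4) ∉ insert 2 {3} from by decide)]
  simp only [lmarginal_insert _ hf (show (2:Fin 4) ∉ ({3} : Finset (Fin 4)) from by decide)]
  simp only [lmarginal_singleton]
  have hval : ∀ r w s z : ℝ,
      (Yset t1 t2).indicator 1 (update (update (update (update (0 : Fin 4 → ℝ) 0 r) 1 w) 2 s) 3 z)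
      = (if (0 ≤ s + r ∧ 0 ≤ s - r ∧ 0 ≤ z + w ∧ 0 ≤ z - w ∧
          2*r ≤ t2 ∧ -(2*r) ≤ t2 ∧ 2*w ≤ t1 ∧ -(2*w) ≤ t1 ∧
          s + 2*z + 3*r ≤ t1 + 2*t2 ∧ s + 2*z - 3*r ≤ t1 + 2*t2 ∧
          2*s + z + 3*w ≤ 2*t1 + t2 ∧ 2*s + z - 3*w ≤ 2*t1 + t2) then (1:ℝ≥0∞) else 0) := by
    intro r w s z
    have hc0 : (update (update (update (update (0 : Fin 4 → ℝ) 0 r) 1 w) 2 s) 3 z) 0 = r := by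
      simp [Function.update_apply]
    have hc1 : (update (update (update (update (0 : Fin 4 → ℝ) 0 r) 1 w) 2 s) 3 z) 1 = w := by
      simp [Function.update_apply]
    have hc2 : (update (update (update (update (0 : Fin 4 → ℝ) 0 r) 1 w) 2 s) 3 z) 2 = s := by
      simp [Function.update_apply]
    have hc3 : (update (update (update (update (0 : Fin 4 → ℝ) 0 r) 1 w) 2 s) 3 z) 3 = z := by
      simp [Function.update_apply]
    rw [Set.indicator_apply, Pi.one_apply]
    refine if_congr ?_ rfl rfl
    simp only [Yset, mem_setOf_eq, hc0, hc1, hc2, hc3]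
  simp only [hval]
  simp only [level1 t1 t2]
  simp only [level2 t1 t2]
  simp only [level3 t1 t2 _ ht1]
  exact level4 t1 t2 ht1 ht2

/-- The volume polynomial vol(T₁P₁ + T₂P₂) equals (1/3)T₁³T₂ + T₁²T₂² + (1/3)T₁T₂³. -/
theorem stmt4 (t1 t2 : ℝ) (h1 : 0 ≤ t1) (h2 : 0 ≤ t2) :
    (volume (t1 • P1 + t2 • P2)).toReal =
      (1 / 3) * t1 ^ 3 * t2 + t1 ^ 2 * t2 ^ 2 + (1 / 3) * t1 * t2 ^ 3 := by
  rw [sum_eq t1 t2 h1 h2, vol_S_eq_4_vol_Y t1 t2, vol_Y t1 t2 h1 h2]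
  have hnn : (0:ℝ) ≤ (t1^3*t2 + 3*t1^2*t2^2 + t1*t2^3)/12 := by
    nlinarith [mul_nonneg (mul_nonneg (mul_nonneg h1 h1) h1) h2,
      mul_nonneg (mul_nonneg (mul_nonneg h1 h1) h2) h2,
      mul_nonneg (mul_nonneg (mul_nonneg h1 h2) h2) h2]
  rw [ENNReal.toReal_mul, ENNReal.toReal_ofReal hnn]
  norm_num
  ring

end
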